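/- For every β > 0, the sum over all (m,n,p) ∈ ℤ³ of T(m,n,p)·exp(−β·R(m,n,p)) is strictly positive, where T(m,n,p) = mn(m+p)(n+p) and R(m,n,p) = m² + n² + p² + mp + np. -/

import Mathlib

open Real

lemma gaussZ {b : ℝ} (hb : 0 < b) : Summable fun n : ℤ => Real.exp (-b * (n : ℝ) ^ 2) := by
  have hgeo : Summable fun n : ℕ => Real.exp (-b) ^ n :=
    summable_geometric_of_lt_one (Real.exp_pos _).le (Real.exp_lt_one_iff.2 (by linarith))
  have key : ∀ n : ℕ, Real.exp (-b * (n : ℝ) ^ 2) ≤ Real.exp (-b) ^ n := by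
    intro n
    rw [← Real.exp_nat_mul]
    apply Real.exp_le_exp.2
    have h1 : (n : ℝ) ≤ (n : ℝ) ^ 2 := by
      rcases Nat.eq_zero_or_pos n with h | h
      · simp [h]
      · have : (1 : ℝ) ≤ (n : ℝ) := by exact_mod_cast h
        nlinarith
    nlinarith
  apply Summable.of_nat_of_neg
  · exact Summable.of_nonneg_of_le (fun n => (Real.exp_pos _).le) key hgeo
  · refine Summable.of_nonneg_of_le (fun n => (Real.exp_pos _).le) (fun n => ?_) hgeo
    have := key n
    push_cast at this ⊢
    convert this using 3
    ring

lemma decay0 {b : ℝ} (hb : 0 < b) (c : ℝ) :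
    Summable fun m : ℤ => Real.exp (-b * ((m : ℝ) + c) ^ 2) := by
  refine Summable.of_nonneg_of_le (fun m => (Real.exp_pos _).le) (fun m => ?_)
    ((gaussZ (b := b / 2) (by linarith)).mul_left (Real.exp (b * c ^ 2)))
  rw [← Real.exp_add]
  apply Real.exp_le_exp.2
  nlinarith [mul_nonneg hb.le (sq_nonneg ((m : ℝ) + 2 * c))]

lemma decay1 {b : ℝ} (hb : 0 < b) (c : ℝ) :
    Summable fun m : ℤ => ((m : ℝ) + c) ^ 2 * Real.exp (-b * ((m : ℝ) + c) ^ 2) := by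
  refine Summable.of_nonneg_of_le
    (fun m => mul_nonneg (sq_nonneg _) (Real.exp_pos _).le) (fun m => ?_)
    ((decay0 (b := b / 2) (by linarith) c).mul_left (2 / b))
  set u : ℝ := ((m : ℝ) + c) ^ 2 with hu
  have hu0 : 0 ≤ u := sq_nonneg _
  have h1 : b / 2 * u ≤ Real.exp (b / 2 * u) := by
    have := Real.add_one_le_exp (b / 2 * u); linarith
  have h2 : u ≤ 2 / b * Real.exp (b / 2 * u) := by
    rw [div_mul_eq_mul_div, le_div_iff₀ hb]
    nlinarith
  calc u * Real.exp (-b * u) ≤ (2 / b * Real.exp (b / 2 * u)) * Real.exp (-b * u) := by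
        apply mul_le_mul_of_nonneg_right h2 (Real.exp_pos _).le
    _ = 2 / b * Real.exp (-(b / 2) * u) := by
        rw [mul_assoc, ← Real.exp_add]; ring_nf

noncomputable def fp (β : ℝ) (p m : ℤ) : ℝ :=
  (m : ℝ) * ((m : ℝ) + (p : ℝ)) * Real.exp (-β * ((m : ℝ) + (p : ℝ) / 2) ^ 2)

lemma fp_abs_summable {β : ℝ} (hβ : 0 < β) (p : ℤ) :
    Summable fun m : ℤ => ‖fp β p m‖ := by
  refine Summable.of_nonneg_of_le (fun m => norm_nonneg _) (fun m => ?_)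
    ((decay1 hβ ((p : ℝ) / 2)).add ((decay0 hβ ((p : ℝ) / 2)).mul_left (((p : ℝ) / 2) ^ 2)))
  have habs : |(m : ℝ) * ((m : ℝ) + (p : ℝ))| ≤ ((m : ℝ) + (p : ℝ) / 2) ^ 2 + ((p : ℝ) / 2) ^ 2 := by
    rw [abs_le]
    constructor <;> nlinarith [sq_nonneg ((m : ℝ) + (p : ℝ) / 2), sq_nonneg ((p : ℝ) / 2)]
  have heq : ‖fp β p m‖ = |(m : ℝ) * ((m : ℝ) + (p : ℝ))| * Real.exp (-β * ((m : ℝ) + (p : ℝ) / 2) ^ 2) := by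
    rw [fp, Real.norm_eq_abs, abs_mul, Real.abs_exp]
  rw [heq]
  have := mul_le_mul_of_nonneg_right habs (Real.exp_pos (-β * ((m : ℝ) + (p : ℝ) / 2) ^ 2)).le
  linarith [this]

noncomputable def Fdef (β : ℝ) : ℤ × ℤ × ℤ → ℝ := fun v =>
  ((v.1:ℝ) * v.2.1 * ((v.1:ℝ) + v.2.2) * ((v.2.1:ℝ) + v.2.2) *
    Real.exp (-β * ((v.1:ℝ)^2 + (v.2.1:ℝ)^2 + (v.2.2:ℝ)^2
      + v.1 * v.2.2 + v.2.1 * v.2.2)))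

lemma Fdef_factor {β : ℝ} (m n p : ℤ) :
    Fdef β (m, n, p) = fp β p m * fp β p n * Real.exp (-β * (p : ℝ) ^ 2 / 2) := by
  have hexp : Real.exp (-β * ((m:ℝ)^2 + (n:ℝ)^2 + (p:ℝ)^2 + (m:ℝ) * (p:ℝ) + (n:ℝ) * (p:ℝ)))
      = Real.exp (-β * ((m:ℝ) + (p:ℝ)/2)^2) * Real.exp (-β * ((n:ℝ) + (p:ℝ)/2)^2) *
        Real.exp (-β * (p:ℝ)^2 / 2) := by
    rw [← Real.exp_add, ← Real.exp_add]
    congr 1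
    ring
  show (m:ℝ) * n * ((m:ℝ) + p) * ((n:ℝ) + p) *
      Real.exp (-β * ((m:ℝ)^2 + (n:ℝ)^2 + (p:ℝ)^2 + (m:ℝ) * (p:ℝ) + (n:ℝ) * (p:ℝ))) = _
  rw [hexp, fp, fp]
  ring

set_option maxHeartbeats 1000000 in
lemma main_summable {β : ℝ} (hβ : 0 < β) : Summable (Fdef β) := by
  have ha : 0 < β / 20 := by linarith
  have hin : Summable fun x : ℤ × ℤ =>
      Real.exp (-(β / 20) * (x.1 : ℝ) ^ 2) * Real.exp (-(β / 20) * (x.2 : ℝ) ^ 2) :=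
    (gaussZ ha).mul_of_nonneg (gaussZ ha) (fun _ => (Real.exp_pos _).le)
      (fun _ => (Real.exp_pos _).le)
  have hout : Summable fun v : ℤ × ℤ × ℤ =>
      Real.exp (-(β / 20) * (v.1 : ℝ) ^ 2) *
        (Real.exp (-(β / 20) * (v.2.1 : ℝ) ^ 2) * Real.exp (-(β / 20) * (v.2.2 : ℝ) ^ 2)) :=
    (gaussZ ha).mul_of_nonneg hin (fun _ => (Real.exp_pos _).le)
      (fun x => mul_nonneg (Real.exp_pos _).le (Real.exp_pos _).le)
  rw [← summable_abs_iff]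
  refine Summable.of_nonneg_of_le (fun v => abs_nonneg _) (fun v => ?_)
    (hout.mul_left (16 / β ^ 2))
  obtain ⟨m, n, p⟩ := v
  simp only [Fdef]
  set x : ℝ := (m : ℝ)
  set y : ℝ := (n : ℝ)
  set z : ℝ := (p : ℝ)
  set R : ℝ := x ^ 2 + y ^ 2 + z ^ 2 + x * z + y * z with hR
  have hR0 : 0 ≤ R := by nlinarith [sq_nonneg (x + z), sq_nonneg (y + z), sq_nonneg x, sq_nonneg y]
  have h1 : 2 * |x * (x + z)| ≤ x ^ 2 + (x + z) ^ 2 := by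
    rw [abs_mul]; nlinarith [sq_nonneg (|x| - |x + z|), sq_abs x, sq_abs (x + z), abs_nonneg x, abs_nonneg (x+z)]
  have h2 : 2 * |y * (y + z)| ≤ y ^ 2 + (y + z) ^ 2 := by
    rw [abs_mul]; nlinarith [sq_nonneg (|y| - |y + z|), sq_abs y, sq_abs (y + z), abs_nonneg y, abs_nonneg (y+z)]
  have hT : |x * y * (x + z) * (y + z)| ≤ R ^ 2 / 4 := by
    have hprod : (2 * |x * (x + z)|) * (2 * |y * (y + z)|) ≤
        (x ^ 2 + (x + z) ^ 2) * (y ^ 2 + (y + z) ^ 2) := by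
      apply mul_le_mul h1 h2 (by positivity) (by nlinarith [abs_nonneg (x * (x+z)), sq_nonneg x, sq_nonneg (x+z)])
    have heq : |x * y * (x + z) * (y + z)| = |x * (x + z)| * |y * (y + z)| := by
      rw [← abs_mul]; ring_nf
    rw [heq]
    nlinarith [sq_nonneg ((x ^ 2 + (x + z) ^ 2) - (y ^ 2 + (y + z) ^ 2))]
  have hRsq : R ^ 2 ≤ 16 / β ^ 2 * Real.exp (β * R / 2) := by
    have ht : β * R / 4 ≤ Real.exp (β * R / 4) := by
      have := Real.add_one_le_exp (β * R / 4); linarith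
    have hsq : (β * R / 4) ^ 2 ≤ Real.exp (β * R / 4) ^ 2 := by
      apply pow_le_pow_left₀ (by positivity) ht
    have hexp2 : Real.exp (β * R / 4) ^ 2 = Real.exp (β * R / 2) := by
      rw [sq, ← Real.exp_add]; ring_nf
    rw [hexp2] at hsq
    rw [div_mul_eq_mul_div, le_div_iff₀ (by positivity : (0:ℝ) < β ^ 2)]
    nlinarith
  have hgauss : Real.exp (-β * R + β * R / 2) ≤
      Real.exp (-(β / 20) * x ^ 2) * (Real.exp (-(β / 20) * y ^ 2) * Real.exp (-(β / 20) * z ^ 2)) := by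
    rw [← Real.exp_add, ← Real.exp_add]
    apply Real.exp_le_exp.2
    nlinarith [mul_nonneg hβ.le (sq_nonneg (9 * z + 5 * x + 5 * y)),
      mul_nonneg hβ.le (sq_nonneg (x - y)), mul_nonneg hβ.le (sq_nonneg x),
      mul_nonneg hβ.le (sq_nonneg y)]
  calc |x * y * (x + z) * (y + z) * Real.exp (-β * R)|
      = |x * y * (x + z) * (y + z)| * Real.exp (-β * R) := by
        rw [abs_mul, Real.abs_exp]
    _ ≤ (R ^ 2 / 4) * Real.exp (-β * R) := by
        apply mul_le_mul_of_nonneg_right hT (Real.exp_pos _).le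
    _ ≤ (16 / β ^ 2 * Real.exp (β * R / 2) / 4) * Real.exp (-β * R) := by
        apply mul_le_mul_of_nonneg_right (by linarith) (Real.exp_pos _).le
    _ ≤ 16 / β ^ 2 * (Real.exp (-(β / 20) * x ^ 2) *
        (Real.exp (-(β / 20) * y ^ 2) * Real.exp (-(β / 20) * z ^ 2))) := by
        have heq2 : 16 / β ^ 2 * Real.exp (β * R / 2) / 4 * Real.exp (-β * R)
            = 16 / β ^ 2 / 4 * Real.exp (-β * R + β * R / 2) := by
          rw [Real.exp_add]; ring
        rw [heq2]
        have h4 : (0:ℝ) ≤ 16 / β ^ 2 / 4 := by positivity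
        calc 16 / β ^ 2 / 4 * Real.exp (-β * R + β * R / 2)
            ≤ 16 / β ^ 2 / 4 * (Real.exp (-(β / 20) * x ^ 2) *
              (Real.exp (-(β / 20) * y ^ 2) * Real.exp (-(β / 20) * z ^ 2))) :=
              mul_le_mul_of_nonneg_left hgauss h4
          _ ≤ 16 / β ^ 2 * (Real.exp (-(β / 20) * x ^ 2) *
              (Real.exp (-(β / 20) * y ^ 2) * Real.exp (-(β / 20) * z ^ 2))) := by
              apply mul_le_mul_of_nonneg_right _ (by positivity)
              have h5 : (0:ℝ) ≤ 16 / β ^ 2 := by positivity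
              linarith

theorem stmt11 (β : ℝ) (hβ : 0 < β) :
    0 < ∑' v : ℤ × ℤ × ℤ,
      ((v.1:ℝ) * v.2.1 * ((v.1:ℝ) + v.2.2) * ((v.2.1:ℝ) + v.2.2) *
        Real.exp (-β * ((v.1:ℝ)^2 + (v.2.1:ℝ)^2 + (v.2.2:ℝ)^2
          + v.1 * v.2.2 + v.2.1 * v.2.2))) := by
  show 0 < ∑' v : ℤ × ℤ × ℤ, Fdef β v
  have hFs : Summable (Fdef β) := main_summable hβ
  let e : (ℤ × ℤ × ℤ) ≃ (ℤ × ℤ × ℤ) :=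
    ⟨fun w => (w.2.1, w.2.2, w.1), fun v => (v.2.2, v.1, v.2.1),
      fun w => rfl, fun v => rfl⟩
  have hGs : Summable (fun w : ℤ × ℤ × ℤ => Fdef β (e w)) := by
    have := (e.summable_iff (f := Fdef β)).2 hFs
    exact this
  set g : ℤ → ℝ := fun p => ∑' m : ℤ, fp β p m with hg
  have key : ∀ p : ℤ, HasSum (fun mn : ℤ × ℤ => Fdef β (e (p, mn)))
      ((g p) ^ 2 * Real.exp (-β * (p : ℝ) ^ 2 / 2)) := by
    intro p
    have hfun : (fun mn : ℤ × ℤ => Fdef β (e (p, mn))) =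
        fun mn : ℤ × ℤ => fp β p mn.1 * fp β p mn.2 * Real.exp (-β * (p : ℝ) ^ 2 / 2) := by
      funext mn
      exact Fdef_factor mn.1 mn.2 p
    rw [hfun]
    have hs : Summable (fun mn : ℤ × ℤ => fp β p mn.1 * fp β p mn.2) :=
      summable_mul_of_summable_norm (fp_abs_summable hβ p) (fp_abs_summable hβ p)
    have h3 := (hs.mul_right (Real.exp (-β * (p : ℝ) ^ 2 / 2))).hasSum
    have h2 : ∑' mn : ℤ × ℤ, fp β p mn.1 * fp β p mn.2 * Real.exp (-β * (p : ℝ) ^ 2 / 2)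
        = (g p) ^ 2 * Real.exp (-β * (p : ℝ) ^ 2 / 2) := by
      rw [tsum_mul_right, ← tsum_mul_tsum_of_summable_norm (fp_abs_summable hβ p)
        (fp_abs_summable hβ p)]
      simp only [hg]
      ring
    rwa [h2] at h3
  have hsum : HasSum (fun p : ℤ => (g p) ^ 2 * Real.exp (-β * (p : ℝ) ^ 2 / 2))
      (∑' w : ℤ × ℤ × ℤ, Fdef β (e w)) :=
    HasSum.prod_fiberwise hGs.hasSum key
  rw [← e.tsum_eq (Fdef β), ← hsum.tsum_eq]
  have hg0 : 0 < g 0 := by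
    refine Summable.tsum_pos ((fp_abs_summable hβ 0).of_norm) (fun m => ?_) 1 ?_
    · have hf0 : fp β 0 m = (m : ℝ) ^ 2 * Real.exp (-β * (m : ℝ) ^ 2) := by
        rw [fp]
        push_cast
        norm_num
        ring
      rw [hf0]
      positivity
    · have hf1 : fp β 0 1 = Real.exp (-β) := by
        rw [fp]
        push_cast
        norm_num
      rw [hf1]
      exact Real.exp_pos _
  refine Summable.tsum_pos hsum.summable (fun p => by positivity) 0 ?_
  exact mul_pos (pow_pos hg0 2) (Real.exp_pos _)
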